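/- If every repeat in a string H has length strictly less than k (equivalently, no substring of length k occurs twice in H), then the sequence of k-mers along H visits each vertex of its De Bruijn graph exactly once; consequently the De Bruijn graph of H contains no directed cycle. -/

import Mathlib

/-- A directed graph (given by its edge relation) is acyclic. -/
def Acyclic {V : Type*} (E : V → V → Prop) : Prop :=
  ∀ (v : V) (l : List V), l ≠ [] → List.Chain' E (v :: l) → l.getLast? ≠ some v

/-- if no length-`k` substring of `H` occurs twice (every repeat is
shorter than `k`), then the sequence of `k`-mers along `H` visits each vertex of
its De Bruijn graph exactly once (the `k`-mer list has no duplicates), and the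
De Bruijn graph has no directed cycle. -/
theorem stmt6 {A : Type*} (H : List A) (k : ℕ) (hk : 0 < k) (hkH : k ≤ H.length)
    (kmer : ℕ → List A) (hkmer : ∀ i, kmer i = (H.drop i).take k)
    (hinj : ∀ i ≤ H.length - k, ∀ j ≤ H.length - k, kmer i = kmer j → i = j)
    (Adj : List A → List A → Prop)
    (hAdj : ∀ u v, Adj u v ↔ ∃ i, i + 1 ≤ H.length - k ∧ kmer i = u ∧ kmer (i + 1) = v) :
    ((List.range (H.length - k + 1)).map kmer).Nodup ∧ Acyclic Adj := by
  set N := H.length - k with hN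
  have aux : ∀ (l : List (List A)) (j : ℕ), j ≤ N → List.Chain' Adj (kmer j :: l) →
      ∀ x, l.getLast? = some x → ∃ m, 0 < m ∧ j + m ≤ N ∧ x = kmer (j + m) := by
    intro l
    induction l with
    | nil => intro j _ _ x hx; simp at hx
    | cons w l' ih =>
      intro j hj hchain x hx
      have hedge : Adj (kmer j) w := (List.isChain_cons_cons.mp hchain).1
      obtain ⟨i, hi1, hiu, hiv⟩ := (hAdj _ _).mp hedge
      have hij : i = j := hinj i (le_trans (Nat.le_succ i) hi1) j hj hiu
      subst hij
      cases l' with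
      | nil =>
        simp at hx
        exact ⟨1, one_pos, hi1, by rw [← hx, hiv]⟩
      | cons y l'' =>
        have hchain' : List.Chain' Adj (kmer (i + 1) :: y :: l'') := by
          rw [hiv]; exact (List.isChain_cons_cons.mp hchain).2
        have hx' : (y :: l'').getLast? = some x := by
          rw [← hx]; simp [List.getLast?]
        obtain ⟨m, hm0, hmN, hxm⟩ := ih (i + 1) hi1 hchain' x hx'
        exact ⟨1 + m, by omega, by omega, by rw [hxm]; ring_nf⟩
  constructor
  · apply List.Nodup.map_on _ List.nodup_range
    intro x hx y hy hxy
    rw [List.mem_range] at hx hy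
    exact hinj x (by omega) y (by omega) hxy
  · intro v l hl hchain hlast
    cases l with
    | nil => exact hl rfl
    | cons w l' =>
      have hedge : Adj v w := (List.isChain_cons_cons.mp hchain).1
      obtain ⟨i, hi1, hiu, _⟩ := (hAdj _ _).mp hedge
      have hiN : i ≤ N := le_trans (Nat.le_succ i) hi1
      rw [← hiu] at hchain hlast
      obtain ⟨m, hm0, hmN, hxm⟩ := aux (w :: l') i hiN hchain _ hlast
      have := hinj i hiN (i + m) hmN hxm
      omega
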